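/- Let i ∈ H and let C be a social choice correspondence which is immune to the reversal bias of type 3. Then both the scc C^i, defined by C^i(p) = {x ∈ C(p) : x ⪰_{p_i} y for all y ∈ C(p)}, and the scc C_i, defined by C_i(p) = {x ∈ C(p) : y ⪰_{p_i} x for all y ∈ C(p)}, are immune to the reversal bias. -/

import Mathlib

/-!
Common framework: preferences on `n ≥ 2` alternatives (`Fin n`) expressed by `h ≥ 2`
individuals (`Fin h`).  Following the paper, a linear order `q ∈ L(N)` is identified with
the permutation of `Fin n` sending each rank position (`0` = best) to the alternative
occupying that position.
-/

/-- A preference relation (a linear order on the set `Fin n` of alternatives), identified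
with the permutation sending each rank position (`0` = best) to the alternative at
that position. -/
abbrev Pref (n : ℕ) := Equiv.Perm (Fin n)

/-- `x ⪰_q y` : alternative `x` is weakly preferred to `y` in `q`. -/
def prefGE {n : ℕ} (q : Pref n) (x y : Fin n) : Prop := q.symm x ≤ q.symm y

/-- `x ≻_q y` : alternative `x` is strictly preferred to `y` in `q`. -/
def prefGT {n : ℕ} (q : Pref n) (x y : Fin n) : Prop := q.symm x < q.symm y

instance {n : ℕ} (q : Pref n) (x y : Fin n) : Decidable (prefGT q x y) :=
  inferInstanceAs (Decidable (q.symm x < q.symm y))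

/-- A preference profile: one preference relation for each individual. -/
abbrev Profile (n h : ℕ) := Fin h → Pref n

/-- A social choice correspondence (the nonemptiness of its values is `IsSCC`). -/
abbrev SCC (n h : ℕ) := Profile n h → Set (Fin n)

/-- `C` has nonempty values, i.e. `C` really is a social choice correspondence. -/
def IsSCC {n h : ℕ} (C : SCC n h) : Prop := ∀ p, (C p).Nonempty

/-- `C` is resolute: it always selects exactly one alternative. -/
def Resolute {n h : ℕ} (C : SCC n h) : Prop := ∀ p, ∃ x, C p = {x}

/-- `C'` is a refinement of `C`. -/
def Refines {n h : ℕ} (C' C : SCC n h) : Prop := ∀ p, C' p ⊆ C p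

/-- The order-reversing permutation `ρ₀ : r ↦ n - r + 1`. -/
def rho0 (n : ℕ) : Equiv.Perm (Fin n) := Fin.revPerm

/-- The profile `p^{(id,id,ρ₀)}` obtained from `p` by reversing every individual
preference. -/
def revProfile {n h : ℕ} (p : Profile n h) : Profile n h := fun i => p i * rho0 n

/-- `C` is immune to the reversal bias. -/
def Immune {n h : ℕ} (C : SCC n h) : Prop :=
  ∀ (p : Profile n h) (x : Fin n), C p = {x} → C (revProfile p) ≠ C p

/-- `Y` is a partition: nonempty, pairwise disjoint, covering blocks. -/
def IsPartition {α : Type*} {s : ℕ} (Y : Fin s → Finset α) : Prop :=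
  (∀ j, (Y j).Nonempty) ∧ (∀ j k, j ≠ k → Disjoint (Y j) (Y k)) ∧ (∀ a, ∃ j, a ∈ Y j)

/-- `C^i`: the alternatives of `C(p)` that are best according to individual `i`. -/
def topSel {n h : ℕ} (i : Fin h) (C : SCC n h) : SCC n h :=
  fun p => {x ∈ C p | ∀ y ∈ C p, prefGE (p i) x y}

/-- `C_i`: the alternatives of `C(p)` that are worst according to individual `i`. -/
def botSel {n h : ℕ} (i : Fin h) (C : SCC n h) : SCC n h :=
  fun p => {x ∈ C p | ∀ y ∈ C p, prefGE (p i) y x}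

/-- Proposition `type3`: if `C` is immune to the reversal bias of
type 3, then both `C^i` (ties broken by the best alternatives of individual `i`) and
`C_i` (ties broken by the worst alternatives of individual `i`) are immune to the
reversal bias. -/
lemma rho0_sq {n : ℕ} : rho0 n * rho0 n = 1 := by
  ext r
  simp [rho0]

lemma revsymm {n : ℕ} (q : Pref n) (x : Fin n) :
    (q * rho0 n).symm x = Fin.rev (q.symm x) := rfl

lemma revProfile_revProfile {n h : ℕ} (p : Profile n h) :
    revProfile (revProfile p) = p := by
  funext j
  show p j * rho0 n * rho0 n = p j
  rw [mul_assoc, rho0_sq, mul_one]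

theorem statement19 {n h : ℕ} (hh : 2 ≤ h) (hn : 2 ≤ n)
    (i : Fin h) (C : SCC n h) (hC : IsSCC C)
    (h3 : ∀ p : Profile n h, (C p ∩ C (revProfile p)).Nonempty → C p = Set.univ) :
    Immune (topSel i C) ∧ Immune (botSel i C) := by
  -- common argument
  have key : ∀ (p : Profile n h) (x : Fin n),
      x ∈ C p → x ∈ C (revProfile p) → C p = Set.univ ∧ C (revProfile p) = Set.univ := by
    intro p x hx1 hx2
    refine ⟨h3 p ⟨x, hx1, hx2⟩, h3 (revProfile p) ⟨x, hx2, ?_⟩⟩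
    rw [revProfile_revProfile]; exact hx1
  haveI : NeZero n := ⟨by omega⟩
  have zero_ne : ¬ ((0 : Fin n) = Fin.rev 0) := by
    intro hcon
    have hv := congrArg Fin.val hcon
    rw [Fin.val_rev] at hv
    simp only [Fin.val_zero] at hv
    omega
  constructor
  · intro p x hsing hcon
    rw [hsing] at hcon
    have hx : x ∈ topSel i C p := by rw [hsing]; rfl
    have hx' : x ∈ topSel i C (revProfile p) := by rw [hcon]; rfl
    obtain ⟨hu1, hu2⟩ := key p x hx.1 hx'.1
    have h1 : (p i).symm x = 0 := by
      have := hx.2 ((p i) 0) (by rw [hu1]; trivial)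
      simpa [prefGE, Fin.le_zero_iff'] using this
    have h2 : (p i).symm x = Fin.rev 0 := by
      have := hx'.2 ((revProfile p i) 0) (by rw [hu2]; trivial)
      simp only [prefGE, revProfile, Equiv.symm_apply_apply] at this
      have h3' : ((p i * rho0 n).symm x : Fin n) = 0 := le_antisymm (by simpa using this) (Fin.zero_le _)
      have : (rho0 n).symm ((p i).symm x) = 0 := h3'
      have := congrArg (rho0 n) this
      rw [Equiv.apply_symm_apply] at this
      rw [this]; rfl
    exact zero_ne (h1 ▸ h2)
  · intro p x hsing hcon
    rw [hsing] at hcon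
    have hx : x ∈ botSel i C p := by rw [hsing]; rfl
    have hx' : x ∈ botSel i C (revProfile p) := by rw [hcon]; rfl
    obtain ⟨hu1, hu2⟩ := key p x hx.1 hx'.1
    have h1 : (p i).symm x = Fin.rev 0 := by
      have hle := hx.2 ((p i) (Fin.rev 0)) (by rw [hu1]; trivial)
      simp only [prefGE, Equiv.symm_apply_apply] at hle
      refine le_antisymm ?_ hle
      rw [← Fin.rev_rev ((p i).symm x)]
      exact Fin.rev_le_rev.mpr (Fin.zero_le _)
    have h2 : (p i).symm x = 0 := by
      have hle := hx'.2 ((revProfile p i) (Fin.rev 0)) (by rw [hu2]; trivial)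
      simp only [prefGE, revProfile, Equiv.symm_apply_apply, revsymm] at hle
      have he : Fin.rev ((p i).symm x) = Fin.rev 0 := by
        refine le_antisymm ?_ hle
        rw [← Fin.rev_rev (Fin.rev ((p i).symm x))]
        exact Fin.rev_le_rev.mpr (Fin.zero_le _)
      exact Fin.rev_injective he
    exact zero_ne (h2 ▸ h1)
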